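/- arXiv:1212.3539 — 3 statements merged into one kernel-verified Lean document; each statement's English description precedes it below -/
import Mathlib

section
/- Let (K, τ) : (N, D) → (M, C) be a lax morphism of comonads, and assume that for every D-coalgebra (N, d), the coreflexive pair C(τ_N)∘δ_{K(N)}, CK(d) : CK(N) ⇉ CKD(N) has an equalizer in M_C. Then for each object N of N, the canonical cofork with vertex CK(N) computed at the cofree D-coalgebra (D(N), δ_N) is a split cofork in M_C; in particular, K^τ(F_D(N)) ≅ F_C(K(N)), i.e., the induced functor K^τ : N_D → M_C commutes with the cofree coalgebra functors up to isomorphism. -/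
open CategoryTheory CategoryTheory.Limits

variable {M N : Type*} [Category M] [Category N]

/-- Given a comonad `C` on `M`, a comonad `D` on `N`, a functor `K : N ⥤ M` and a
transformation `τ : CK ⟶ KD`, the morphism of cofree `C`-coalgebras
`F_C(K(X)) ⟶ F_C(K(D(X)))` whose underlying map is `C(τ_X) ∘ δ_{K(X)}`; it corresponds
to `τ_X : C(K(X)) ⟶ K(D(X))` under the adjunction `U_C ⊣ F_C`. -/
def coindMap (C : Comonad M) (D : Comonad N) (K : N ⥤ M)
    (τ : K ⋙ C.toFunctor ⟶ D.toFunctor ⋙ K) (X : N) :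
    C.cofree.obj (K.obj X) ⟶ C.cofree.obj (K.obj (D.obj X)) :=
  (C.adj.homEquiv (C.cofree.obj (K.obj X)) (K.obj (D.obj X))) (τ.app X)

lemma coindMap_f (C : Comonad M) (D : Comonad N) (K : N ⥤ M)
    (τ : K ⋙ C.toFunctor ⟶ D.toFunctor ⋙ K) (X : N) :
    (coindMap C D K τ X).f = C.δ.app (K.obj X) ≫ C.map (τ.app X) := by
  simp [coindMap, Adjunction.homEquiv]
  rfl

/-- Let `(K, τ) : (N, D) → (M, C)` be a lax morphism of comonads, and assume that for
every `D`-coalgebra `(N, d)` the coreflexive pair `C(τ_N) ∘ δ_{K(N)}, CK(d)` has an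
equalizer in `M_C`.  Then for every object `X` of `N`, the canonical cofork at the cofree
`D`-coalgebra `(D(X), δ_X)` is a split cofork in `M_C`; in particular its ι-map
is an equalizer, so `K^τ(F_D(X)) ≅ F_C(K(X))`. -/
theorem stmt_7 (C : Comonad M) (D : Comonad N) (K : N ⥤ M)
    (τ : K ⋙ C.toFunctor ⟶ D.toFunctor ⋙ K)
    (lax_δ : ∀ X : N,
      τ.app X ≫ K.map (D.δ.app X) =
        C.δ.app (K.obj X) ≫ C.map (τ.app X) ≫ τ.app (D.obj X))
    (lax_ε : ∀ X : N, τ.app X ≫ K.map (D.ε.app X) = C.ε.app (K.obj X))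
    (heq : ∀ A : D.Coalgebra,
      HasEqualizer (coindMap C D K τ A.A) (C.cofree.map (K.map A.a))) :
    ∀ X : N,
      ∃ w : coindMap C D K τ X ≫ C.cofree.map (K.map (D.δ.app X)) =
            coindMap C D K τ X ≫ coindMap C D K τ (D.obj X),
        (coindMap C D K τ X ≫ C.cofree.map (K.map (D.ε.app X)) = 𝟙 _) ∧
        (C.cofree.map (K.map (D.δ.app X)) ≫
            C.cofree.map (K.map (D.map (D.ε.app X))) = 𝟙 _) ∧
        (coindMap C D K τ (D.obj X) ≫ C.cofree.map (K.map (D.map (D.ε.app X))) =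
          C.cofree.map (K.map (D.ε.app X)) ≫ coindMap C D K τ X) ∧
        Nonempty (IsLimit (Fork.ofι (coindMap C D K τ X) w)) := by
  intro X
  have hδnat : ∀ {A B : M} (f : A ⟶ B),
      C.map f ≫ C.δ.app B = C.δ.app A ≫ C.map (C.map f) := fun f => by
    simpa using C.δ.naturality f
  have hδnat' : ∀ {A B Z : M} (f : A ⟶ B) (h : C.obj (C.obj B) ⟶ Z),
      C.map f ≫ C.δ.app B ≫ h = C.δ.app A ≫ C.map (C.map f) ≫ h := fun f h => by
    rw [← Category.assoc, hδnat, Category.assoc]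
  have w : coindMap C D K τ X ≫ C.cofree.map (K.map (D.δ.app X)) =
      coindMap C D K τ X ≫ coindMap C D K τ (D.obj X) := by
    ext
    simp only [Comonad.Coalgebra.comp_f, coindMap_f, Comonad.cofree_map_f, Category.assoc,
      ← Functor.map_comp, lax_δ X]
    show (C.δ.app (K.obj X) ≫ C.map (τ.app X)) ≫ C.map (K.map (D.δ.app X)) =
      (C.δ.app (K.obj X) ≫ C.map (τ.app X)) ≫ (C.δ.app (K.obj (D.obj X)) ≫ C.map (τ.app (D.obj X)))
    simp only [Category.assoc, ← Functor.map_comp, lax_δ X]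
    simp only [Functor.map_comp, Comonad.coassoc_assoc]
    rw [hδnat' (B := K.obj (D.obj X)) (τ.app X)]
    rfl
  have hs : coindMap C D K τ X ≫ C.cofree.map (K.map (D.ε.app X)) = 𝟙 _ := by
    ext
    simp only [Comonad.Coalgebra.comp_f, coindMap_f, Comonad.cofree_map_f, Category.assoc,
      ← Functor.map_comp, lax_ε X]
    show (C.δ.app (K.obj X) ≫ C.map (τ.app X)) ≫ C.map (K.map (D.ε.app X)) = 𝟙 (C.obj (K.obj X))
    simp only [Category.assoc, ← Functor.map_comp, lax_ε X]
    simp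
  have ht : C.cofree.map (K.map (D.δ.app X)) ≫
      C.cofree.map (K.map (D.map (D.ε.app X))) = 𝟙 _ := by
    rw [← Functor.map_comp, ← Functor.map_comp, D.right_counit]
    simp
  have hgt : coindMap C D K τ (D.obj X) ≫ C.cofree.map (K.map (D.map (D.ε.app X))) =
      C.cofree.map (K.map (D.ε.app X)) ≫ coindMap C D K τ X := by
    ext
    simp only [Comonad.Coalgebra.comp_f, coindMap_f, Comonad.cofree_map_f, Category.assoc]
    show (C.δ.app (K.obj (D.obj X)) ≫ C.map (τ.app (D.obj X))) ≫ C.map (K.map (D.map (D.ε.app X))) =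
      C.map (K.map (D.ε.app X)) ≫ C.δ.app (K.obj X) ≫ C.map (τ.app X)
    simp only [Category.assoc]
    rw [← Functor.map_comp]
    have := τ.naturality (D.ε.app X)
    dsimp at this
    rw [← this, Functor.map_comp, ← Category.assoc,
      ← hδnat (B := K.obj X) (K.map (D.ε.app X)), Category.assoc]
  refine ⟨w, hs, ht, hgt, ⟨Fork.IsLimit.mk _ (fun s => s.ι ≫ C.cofree.map (K.map (D.ε.app X)))
    (fun s => ?_) (fun s m hm => ?_)⟩⟩
  · have := s.condition
    simp only [Fork.ι_ofι]
    calc (s.ι ≫ C.cofree.map (K.map (D.ε.app X))) ≫ coindMap C D K τ X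
        = s.ι ≫ coindMap C D K τ (D.obj X) ≫ C.cofree.map (K.map (D.map (D.ε.app X))) := by
          rw [hgt]; simp
      _ = s.ι ≫ C.cofree.map (K.map (D.δ.app X)) ≫
            C.cofree.map (K.map (D.map (D.ε.app X))) := by
          rw [← Category.assoc, ← Category.assoc, ← this]
      _ = s.ι := by rw [ht]; simp
  · simp only [Fork.ι_ofι] at hm
    rw [← hm]
    simp [hs]
end

section
/- (Conjugate Comonadicity Theorem.) Let (H, K) be an adjunction with H : M → N. The following are equivalent: (i) for every comonad C on M such that C and C² preserve equalizers of coreflexive H-split pairs, the comparison functor Q_C : M_C → N_{C̃} into coalgebras over the conjugate comonad C̃ = HCK is an equivalence; (ii) M has equalizers of all coreflexive H-split pairs, H preserves these equalizers, and H is conservative. -/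
open CategoryTheory CategoryTheory.Limits

variable {M N : Type*} [Category M] [Category N]

/-- A parallel pair `(f, g)` in `M` is `H`-split if its image under `H` extends to a
split cofork (split equalizer) in `N`. -/
def IsHSplitPair (H : M ⥤ N) {A B : M} (f g : A ⟶ B) : Prop :=
  ∃ (E : N) (ι : E ⟶ H.obj A) (r : H.obj A ⟶ E) (s : H.obj B ⟶ H.obj A),
    ι ≫ H.map f = ι ≫ H.map g ∧
    ι ≫ r = 𝟙 E ∧
    H.map f ≫ s = 𝟙 (H.obj A) ∧
    H.map g ≫ s = r ≫ ι

/-- A functor `F : M ⥤ N` preserves the equalizer of a parallel pair `(f, g)` in the sense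
that any equalizer fork of `(f, g)` is carried to an equalizer fork of `(F f, F g)`. -/
def PreservesEqualizerOf (F : M ⥤ N) {A B : M} (f g : A ⟶ B) : Prop :=
  ∀ {E : M} (e : E ⟶ A) (w : e ≫ f = e ≫ g), IsLimit (Fork.ofι e w) →
    Nonempty (IsLimit (Fork.ofι (f := F.map f) (g := F.map g) (F.map e)
      (by simp only [← Functor.map_comp, w])))

namespace ConjAux

universe v₁ v₂ u₁ u₂
variable {C : Type u₁} {D : Type u₂} [Category.{v₁} C] [Category.{v₂} D]

/-- swap a limit fork -/
def forkSwapIsLimit {A B E : C} {f g : A ⟶ B} {e : E ⟶ A} (w : e ≫ f = e ≫ g)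
    (h : IsLimit (Fork.ofι e w)) : IsLimit (Fork.ofι e w.symm) :=
  Fork.IsLimit.mk' _ fun s => by
    obtain ⟨l, hl⟩ := Fork.IsLimit.lift' h s.ι s.condition.symm
    exact ⟨l, hl, fun hm => Fork.IsLimit.hom_ext h (by rw [hl]; simpa using hm)⟩

theorem hasEqualizer_swap {A B : C} {f g : A ⟶ B} (h : HasEqualizer f g) : HasEqualizer g f := by
  haveI := h
  exact HasLimit.mk ⟨_, forkSwapIsLimit (equalizer.condition f g) (equalizerIsEqualizer f g)⟩

theorem preservesEqualizerOf_swap (F : C ⥤ D) {A B : C} {f g : A ⟶ B}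
    (h : PreservesEqualizerOf F f g) : PreservesEqualizerOf F g f := by
  intro E e w hl
  obtain ⟨hl'⟩ := h e w.symm (forkSwapIsLimit w hl)
  exact ⟨forkSwapIsLimit _ hl'⟩

theorem preservesEqualizerOf_of_preservesLimit (F : C ⥤ D) {A B : C} (f g : A ⟶ B)
    [PreservesLimit (parallelPair f g) F] : PreservesEqualizerOf F f g :=
  fun e w hl => ⟨isLimitForkMapOfIsLimit F w hl⟩

theorem preservesLimit_parallelPair_of (F : C ⥤ D) {A B : C} (f g : A ⟶ B) [HasEqualizer f g]
    (h : PreservesEqualizerOf F f g) : PreservesLimit (parallelPair f g) F := by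
  obtain ⟨hl⟩ := h (equalizer.ι f g) (equalizer.condition f g) (equalizerIsEqualizer f g)
  exact preservesLimit_of_preserves_limit_cone (equalizerIsEqualizer f g)
    ((isLimitMapConeForkEquiv F _).symm hl)

theorem IsHSplitPair.hasSplitEqualizer {H : C ⥤ D} {A B : C} {f g : A ⟶ B}
    (h : IsHSplitPair H f g) : HasSplitEqualizer (H.map g) (H.map f) := by
  obtain ⟨E, ι, r, s, h1, h2, h3, h4⟩ := h
  exact ⟨E, ι, ⟨⟨r, s, h1.symm, h2, h3, h4⟩⟩⟩

theorem isHSplitPair_of_isSplitEqualizer {H : C ⥤ D} {A B : C} {f g : A ⟶ B} {W : D}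
    {ι : W ⟶ H.obj A} (q : IsSplitEqualizer (H.map g) (H.map f) ι) : IsHSplitPair H f g :=
  ⟨W, ι, q.leftRetraction, q.rightRetraction, q.condition.symm, q.ι_leftRetraction,
    q.bottom_rightRetraction, q.top_rightRetraction⟩

theorem isCoreflexivePair_map (F : C ⥤ D) {A B : C} (f g : A ⟶ B) [IsCoreflexivePair f g] :
    IsCoreflexivePair (F.map f) (F.map g) :=
  IsCoreflexivePair.mk' (F.map (commonRetraction f g))
    (by rw [← F.map_comp, left_comp_retraction, F.map_id])
    (by rw [← F.map_comp, right_comp_retraction, F.map_id])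


noncomputable section
namespace Internal
open CategoryTheory.Comonad
variable {F : C ⥤ D} {G : D ⥤ C} (adj : F ⊣ G)

/-- The "main pair" for a coalgebra `(A, α)` is the pair of morphisms `(G α, η_GA)`. It is always a
coreflexive pair, and will be used to construct the left adjoint to the comparison functor and show
it is an equivalence.
-/
instance main_pair_coreflexive (A : adj.toComonad.Coalgebra) :
    IsCoreflexivePair (G.map A.a) (adj.unit.app (G.obj A.A)) := by
  apply IsCoreflexivePair.mk' (G.map (adj.counit.app _)) _ _
  · exact (G.map_comp _ _).symm.trans ((congr_arg G.map A.counit).trans (G.map_id _))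
  · rw [adj.right_triangle_components]
    rfl

/-- The "main pair" for a coalgebra `(A, α)` is the pair of morphisms `(G α, η_GA)`. It is always a
`G`-cosplit pair, and will be used to construct the right adjoint to the comparison functor and show
it is an equivalence.
-/
instance main_pair_F_cosplit (A : adj.toComonad.Coalgebra) :
    F.IsCosplitPair (G.map A.a)
      (adj.unit.app (G.obj A.A)) where
  splittable := ⟨_, _, ⟨beckSplitEqualizer A⟩⟩

theorem homEquiv_cond_aux (A : adj.toComonad.Coalgebra) (B : C) (g : F.obj B ⟶ A.A)
    (hg : F.map (adj.unit.app B) ≫ F.map (G.map g) = g ≫ A.a) :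
    adj.homEquiv _ _ g ≫ G.map A.a = adj.homEquiv _ _ g ≫ adj.unit.app (G.obj A.A) := by
  have e1 : adj.homEquiv _ _ g ≫ G.map A.a = adj.unit.app B ≫ G.map (g ≫ A.a) := by
    rw [Adjunction.homEquiv_unit, Category.assoc, G.map_comp]
  have e2 : adj.unit.app B ≫ G.map (F.map (adj.unit.app B) ≫ F.map (G.map g)) =
      adj.homEquiv _ _ g ≫ adj.unit.app (G.obj A.A) := by
    simp [Adjunction.homEquiv_unit]
  exact e1.trans ((congrArg (fun x : F.obj B ⟶ F.obj (G.obj A.A) => adj.unit.app B ≫ G.map x)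
    hg.symm).trans e2)

theorem homEquiv_symm_cond_aux (A : adj.toComonad.Coalgebra) (B : C) (h : B ⟶ G.obj A.A)
    (hh : h ≫ G.map A.a = h ≫ adj.unit.app (G.obj A.A)) :
    F.map (adj.unit.app B) ≫ F.map (G.map ((adj.homEquiv _ _).symm h)) =
      (adj.homEquiv _ _).symm h ≫ A.a := by
  have l1 : adj.homEquiv B (F.obj (G.obj A.A))
      (F.map (adj.unit.app B) ≫ F.map (G.map ((adj.homEquiv B A.A).symm h))) =
      h ≫ adj.unit.app (G.obj A.A) := by
    rw [Adjunction.homEquiv_naturality_left, Adjunction.homEquiv_unit, adj.unit_naturality,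
      ← Category.assoc, ← Adjunction.homEquiv_unit, Equiv.apply_symm_apply]
  have l2 : adj.homEquiv B (adj.toComonad.obj A.A) ((adj.homEquiv B A.A).symm h ≫ A.a) =
      h ≫ G.map A.a := by
    rw [Adjunction.homEquiv_naturality_right, Equiv.apply_symm_apply]
  exact (adj.homEquiv B (adj.toComonad.obj A.A)).injective (l1.trans (hh.symm.trans l2.symm))

/-- The object function for the right adjoint to the comparison functor. -/
def comparisonRightAdjointObj (A : adj.toComonad.Coalgebra)
    [HasEqualizer (G.map A.a) (adj.unit.app _)] : C :=
  equalizer (G.map A.a) (adj.unit.app _)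

/--
We have a bijection of homsets which will be used to construct the right adjoint to the comparison
functor.
-/
@[simps!]
def comparisonRightAdjointHomEquiv (A : adj.toComonad.Coalgebra) (B : C)
    [HasEqualizer (G.map A.a) (adj.unit.app (G.obj A.A))] :
    ((comparison adj).obj B ⟶ A) ≃ (B ⟶ comparisonRightAdjointObj adj A) where
      toFun f := by
        refine equalizer.lift (adj.homEquiv _ _ f.f) ?_
        exact homEquiv_cond_aux adj A B f.f f.h
      invFun f := by
        refine ⟨(adj.homEquiv _ _).symm (f ≫ (equalizer.ι _ _)), ?_⟩
        exact homEquiv_symm_cond_aux adj A B (f ≫ equalizer.ι _ _)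
          ((Category.assoc _ _ _).trans ((congrArg (fun x => f ≫ x)
            (equalizer.condition _ _)).trans (Category.assoc _ _ _).symm))
      left_inv f := Comonad.Coalgebra.Hom.ext
        ((congr_arg (adj.homEquiv _ _).symm (equalizer.lift_ι _ _)).trans
          ((adj.homEquiv _ _).symm_apply_apply f.f))
      right_inv f := by
        apply equalizer.hom_ext
        exact (equalizer.lift_ι _ _).trans ((adj.homEquiv _ _).apply_symm_apply _)

/-- Construct the adjunction to the comparison functor.
-/
def rightAdjointComparison
    [∀ A : adj.toComonad.Coalgebra, HasEqualizer (G.map A.a)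
      (adj.unit.app (G.obj A.A))] :
    adj.toComonad.Coalgebra ⥤ C := by
  refine
    Adjunction.rightAdjointOfEquiv (F := comparison adj)
      (G_obj := fun A => comparisonRightAdjointObj adj A) (fun A B => ?_) ?_
  · apply comparisonRightAdjointHomEquiv
  · intro A B B' g h
    apply equalizer.hom_ext
    exact ((equalizer.lift_ι _ _).trans (adj.homEquiv_naturality_left g h.f)).trans
      ((congr_arg (g ≫ ·) (equalizer.lift_ι _ _)).symm.trans (Category.assoc _ _ _).symm)

/-- Provided we have the appropriate equalizers, we have an adjunction to the comparison functor.
-/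
@[simps! counit]
def comparisonAdjunction
    [∀ A : adj.toComonad.Coalgebra, HasEqualizer (G.map A.a)
      (adj.unit.app (G.obj A.A))] :
    comparison adj ⊣ rightAdjointComparison adj :=
  Adjunction.adjunctionOfEquivRight _ _

variable {adj}

theorem comparisonAdjunction_counit_f_aux
    [∀ A : adj.toComonad.Coalgebra, HasEqualizer (G.map A.a)
      (adj.unit.app (G.obj A.A))]
    (A : adj.toComonad.Coalgebra) :
    ((comparisonAdjunction adj).counit.app A).f =
      (adj.homEquiv _ A.A).symm (equalizer.ι (G.map A.a) (adj.unit.app (G.obj A.A))) :=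
  congr_arg (adj.homEquiv _ _).symm (Category.id_comp _)

/-- This is a fork which is helpful for establishing comonadicity: the morphism from this fork to
the Beck equalizer is the counit for the adjunction on the comparison functor.
-/
@[simps! pt]
def counitFork (A : adj.toComonad.Coalgebra)
    [HasEqualizer (G.map A.a) (adj.unit.app (G.obj A.A))] :
    Fork (F.map (G.map A.a)) (F.map (adj.unit.app (G.obj A.A))) :=
  Fork.ofι (F.map (equalizer.ι (G.map A.a) (adj.unit.app (G.obj A.A))))
    (by
      change _ = F.map _ ≫ _
      rw [← F.map_comp]
      exact (congr_arg F.map (equalizer.condition _ _)).trans (F.map_comp _ _))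

@[simp]
theorem unitFork_ι (A : adj.toComonad.Coalgebra)
    [HasEqualizer (G.map A.a) (adj.unit.app (G.obj A.A))] :
    (counitFork A).ι = F.map (equalizer.ι (G.map A.a) (adj.unit.app (G.obj A.A))) :=
  rfl

theorem comparisonAdjunction_counit_f
    [∀ A : adj.toComonad.Coalgebra, HasEqualizer (G.map A.a)
      (adj.unit.app (G.obj A.A))]
    (A : adj.toComonad.Coalgebra) :
    ((comparisonAdjunction adj).counit.app A).f = (beckEqualizer A).lift (counitFork A) := by
  simp [Adjunction.homEquiv_counit]
  exact congr_arg (fun x => F.map x ≫ adj.counit.app A.A) (Category.id_comp _)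

variable (adj)

/-- The fork which describes the unit of the adjunction: the morphism from this fork to the
the equalizer of this pair is the unit.
-/
@[simps!]
def unitFork (B : C) :
    Fork (G.map (F.map (adj.unit.app B)))
      (adj.unit.app (G.obj (F.obj B))) :=
  Fork.ofι (adj.unit.app B) (adj.unit_naturality _)

variable {adj} in
/-- The counit fork is a limit provided `F` preserves it. -/
def counitLimitOfPreservesEqualizer (A : adj.toComonad.Coalgebra)
    [HasEqualizer (G.map A.a) (adj.unit.app (G.obj A.A))]
    [PreservesLimit (parallelPair (G.map A.a) (adj.unit.app (G.obj A.A))) F] :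
    IsLimit (counitFork (G := G) A) :=
  isLimitOfHasEqualizerOfPreservesLimit F _ _

/-- The unit fork is a limit provided `F` coreflects it. -/
def unitEqualizerOfCoreflectsEqualizer (B : C)
    [ReflectsLimit (parallelPair (G.map (F.map (adj.unit.app B)))
      (adj.unit.app (G.obj (F.obj B)))) F] :
    IsLimit (unitFork (adj := adj) B) :=
  isLimitOfIsLimitForkMap F _ (beckEqualizer ((comparison adj).obj B))

instance
    [∀ A : adj.toComonad.Coalgebra, HasEqualizer (G.map A.a) (adj.unit.app (G.obj A.A))]
    (B : C) : HasLimit (parallelPair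
      (G.map (F.map (NatTrans.app adj.unit B)))
      (NatTrans.app adj.unit (G.obj (F.obj B)))) :=
  inferInstanceAs <| HasEqualizer
    (G.map ((comparison adj).obj B).a)
    (adj.unit.app (G.obj ((comparison adj).obj B).A))

theorem comparisonAdjunction_unit_app
    [∀ A : adj.toComonad.Coalgebra, HasEqualizer (G.map A.a) (adj.unit.app (G.obj A.A))] (B : C) :
    (comparisonAdjunction adj).unit.app B = limit.lift _ (unitFork adj B) := by
  apply equalizer.hom_ext
  exact (equalizer.lift_ι _ _).trans ((adj.homEquiv_id B).trans
    (limit.lift_π (unitFork adj B) WalkingParallelPair.zero).symm)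

end Internal
end




open Comonad in
theorem comparisonIsEquivalence {F : C ⥤ D} {G : D ⥤ C} (adj : F ⊣ G)
    [∀ A : adj.toComonad.Coalgebra, HasEqualizer (G.map A.a) (adj.unit.app (G.obj A.A))]
    [∀ A : adj.toComonad.Coalgebra,
      PreservesLimit (parallelPair (G.map A.a) (adj.unit.app (G.obj A.A))) F]
    [∀ A : adj.toComonad.Coalgebra,
      ReflectsLimit (parallelPair (G.map A.a) (adj.unit.app (G.obj A.A))) F] :
    (Comonad.comparison adj).IsEquivalence := by
  have : ∀ (X : Coalgebra adj.toComonad), IsIso ((Internal.comparisonAdjunction adj).counit.app X) := by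
    intro X
    apply @isIso_of_reflects_iso _ _ _ _ _ _ _ (Comonad.forget adj.toComonad) ?_ _
    · change IsIso ((Internal.comparisonAdjunction adj).counit.app X).f
      rw [Internal.comparisonAdjunction_counit_f]
      change
        IsIso
          (IsLimit.conePointUniqueUpToIso (beckEqualizer X)
              (Internal.counitLimitOfPreservesEqualizer X)).inv
      exact (IsLimit.conePointUniqueUpToIso _ _).isIso_inv
  have : ∀ (Y : C), IsIso ((Internal.comparisonAdjunction adj).unit.app Y) := by
    intro Y
    rw [Internal.comparisonAdjunction_unit_app]
    change IsIso (IsLimit.conePointUniqueUpToIso _ ?_).inv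
    infer_instance
    apply @Internal.unitEqualizerOfCoreflectsEqualizer _ _ _ _ _ _ _ _ ?_
    exact inferInstanceAs (ReflectsLimit (parallelPair
      (G.map ((Comonad.comparison adj).obj Y).a)
      (adj.unit.app (G.obj ((Comonad.comparison adj).obj Y).A))) F)
  have h := (Internal.comparisonAdjunction adj).toEquivalence.symm.isEquivalence_inverse
  exact h

end ConjAux

section Backward

open ConjAux

variable {M N : Type*} [Category M] [Category N]

theorem backward {H : M ⥤ N} {K : N ⥤ M} (adj : H ⊣ K)
    (hEq : ∀ {A B : M} (f g : A ⟶ B), IsCoreflexivePair f g → IsHSplitPair H f g →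
      HasEqualizer f g)
    (hPres : ∀ {A B : M} (f g : A ⟶ B), IsCoreflexivePair f g → IsHSplitPair H f g →
      PreservesEqualizerOf H f g)
    (hCons : ∀ {A B : M} (f : A ⟶ B), IsIso (H.map f) → IsIso f)
    (C : Comonad M)
    (hC : ∀ {A B : M} (f g : A ⟶ B), IsCoreflexivePair f g → IsHSplitPair H f g →
        PreservesEqualizerOf C.toFunctor f g ∧
        PreservesEqualizerOf (C.toFunctor ⋙ C.toFunctor) f g) :
    (Comonad.comparison (C.adj.comp adj)).IsEquivalence := by
  letI adj' := C.adj.comp adj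
  haveI : H.ReflectsIsomorphisms := ⟨fun f _ => hCons f inferInstance⟩
  -- gather per-coalgebra facts
  have key : ∀ A : adj'.toComonad.Coalgebra,
      HasEqualizer ((K ⋙ C.cofree).map A.a) (adj'.unit.app ((K ⋙ C.cofree).obj A.A)) ∧
      PreservesLimit (parallelPair ((K ⋙ C.cofree).map A.a)
        (adj'.unit.app ((K ⋙ C.cofree).obj A.A))) (C.forget ⋙ H) ∧
      ReflectsLimit (parallelPair ((K ⋙ C.cofree).map A.a)
        (adj'.unit.app ((K ⋙ C.cofree).obj A.A))) (C.forget ⋙ H) := by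
    intro A
    set p₁ : (K ⋙ C.cofree).obj A.A ⟶ (K ⋙ C.cofree).obj (adj'.toComonad.obj A.A) :=
      (K ⋙ C.cofree).map A.a with hp₁
    set p₂ : (K ⋙ C.cofree).obj A.A ⟶ (K ⋙ C.cofree).obj (adj'.toComonad.obj A.A) :=
      adj'.unit.app ((K ⋙ C.cofree).obj A.A) with hp₂
    letI u₁ := (Comonad.forget C).map p₁
    letI u₂ := (Comonad.forget C).map p₂
    -- the underlying pair is H-split
    have hsplit : IsHSplitPair H u₂ u₁ := by
      haveI : (C.forget ⋙ H).IsCosplitPair p₁ p₂ :=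
        ConjAux.Internal.main_pair_F_cosplit adj' A
      exact isHSplitPair_of_isSplitEqualizer
        (show IsSplitEqualizer (H.map u₁) (H.map u₂) _ from
          HasSplitEqualizer.isSplitEqualizer ((C.forget ⋙ H).map p₁) ((C.forget ⋙ H).map p₂))
    -- the underlying pair is coreflexive
    haveI : IsCoreflexivePair p₁ p₂ := ConjAux.Internal.main_pair_coreflexive adj' A
    have hcorefl : IsCoreflexivePair u₂ u₁ :=
      (isCoreflexivePair_map (Comonad.forget C) p₁ p₂).swap
    -- equalizer downstairs and its preservation
    haveI hU : HasEqualizer u₁ u₂ := hasEqualizer_swap (hEq u₂ u₁ hcorefl hsplit)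
    haveI hPresH : PreservesLimit (parallelPair u₁ u₂) H :=
      preservesLimit_parallelPair_of H u₁ u₂
        (preservesEqualizerOf_swap H (hPres u₂ u₁ hcorefl hsplit))
    haveI hPresC : PreservesLimit (parallelPair u₁ u₂) C.toFunctor :=
      preservesLimit_parallelPair_of C.toFunctor u₁ u₂
        (preservesEqualizerOf_swap _ (hC u₂ u₁ hcorefl hsplit).1)
    haveI hPresCC : PreservesLimit (parallelPair u₁ u₂) (C.toFunctor ⋙ C.toFunctor) :=
      preservesLimit_parallelPair_of _ u₁ u₂
        (preservesEqualizerOf_swap _ (hC u₂ u₁ hcorefl hsplit).2)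
    -- C preserves the equalizer of the image pair
    haveI hPC2 : PreservesLimit (parallelPair (C.toFunctor.map u₁) (C.toFunctor.map u₂))
        C.toFunctor := by
      have mc := isLimitForkMapOfIsLimit C.toFunctor (equalizer.condition u₁ u₂)
        (equalizerIsEqualizer u₁ u₂)
      have mcc := isLimitForkMapOfIsLimit (C.toFunctor ⋙ C.toFunctor)
        (equalizer.condition u₁ u₂) (equalizerIsEqualizer u₁ u₂)
      exact preservesLimit_of_preserves_limit_cone mc
        ((isLimitMapConeForkEquiv C.toFunctor _).symm mcc)
    -- instances for creating the equalizer upstairs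
    haveI i1 : PreservesLimit (parallelPair p₁ p₂ ⋙ Comonad.forget C) C.toFunctor :=
      preservesLimit_of_iso_diagram (K₁ := parallelPair u₁ u₂) C.toFunctor
        ((diagramIsoParallelPair (parallelPair p₁ p₂ ⋙ Comonad.forget C)).symm)
    haveI i2 : PreservesLimit ((parallelPair p₁ p₂ ⋙ Comonad.forget C) ⋙ C.toFunctor)
        C.toFunctor :=
      preservesLimit_of_iso_diagram
        (K₁ := parallelPair (C.toFunctor.map u₁) (C.toFunctor.map u₂)) C.toFunctor
        ((diagramIsoParallelPair ((parallelPair p₁ p₂ ⋙ Comonad.forget C) ⋙ C.toFunctor)).symm)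
    haveI : CreatesLimit (parallelPair p₁ p₂) (Comonad.forget C) :=
      CategoryTheory.Comonad.forgetCreatesLimit _
    haveI : HasLimit (parallelPair p₁ p₂ ⋙ Comonad.forget C) :=
      hasLimit_of_iso (F := parallelPair u₁ u₂)
        ((diagramIsoParallelPair (parallelPair p₁ p₂ ⋙ Comonad.forget C)).symm)
    haveI hUp : HasEqualizer p₁ p₂ := hasLimit_of_created (parallelPair p₁ p₂) (Comonad.forget C)
    -- preservation by the composite
    haveI : PreservesLimit (parallelPair p₁ p₂) (Comonad.forget C) := inferInstance
    haveI : PreservesLimit (parallelPair p₁ p₂ ⋙ Comonad.forget C) H :=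
      preservesLimit_of_iso_diagram (K₁ := parallelPair u₁ u₂) H
        ((diagramIsoParallelPair (parallelPair p₁ p₂ ⋙ Comonad.forget C)).symm)
    haveI hp : PreservesLimit (parallelPair p₁ p₂) (C.forget ⋙ H) := inferInstance
    haveI : (C.forget ⋙ H).ReflectsIsomorphisms := inferInstance
    haveI hr : ReflectsLimit (parallelPair p₁ p₂) (C.forget ⋙ H) :=
      reflectsLimit_of_reflectsIsomorphisms _ _
    exact ⟨hUp, hp, hr⟩
  haveI : ∀ A : adj'.toComonad.Coalgebra,
      HasEqualizer ((K ⋙ C.cofree).map A.a) (adj'.unit.app ((K ⋙ C.cofree).obj A.A)) :=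
    fun A => (key A).1
  haveI : ∀ A : adj'.toComonad.Coalgebra,
      PreservesLimit (parallelPair ((K ⋙ C.cofree).map A.a)
        (adj'.unit.app ((K ⋙ C.cofree).obj A.A))) (C.forget ⋙ H) :=
    fun A => (key A).2.1
  haveI : ∀ A : adj'.toComonad.Coalgebra,
      ReflectsLimit (parallelPair ((K ⋙ C.cofree).map A.a)
        (adj'.unit.app ((K ⋙ C.cofree).obj A.A))) (C.forget ⋙ H) :=
    fun A => (key A).2.2
  exact ConjAux.comparisonIsEquivalence adj'

end Backward

section Forward

open ConjAux

variable (M : Type*) [Category M] {N : Type*} [Category N]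

/-- The identity comonad. -/
def idComonad : Comonad M where
  toFunctor := 𝟭 M
  ε := { app := fun X => 𝟙 X }
  δ := { app := fun X => 𝟙 X }

/-- The canonical functor to coalgebras over the identity comonad. -/
def toIdCoalgebra : M ⥤ (idComonad M).Coalgebra where
  obj X :=
    { A := X
      a := 𝟙 X
      counit := by simp [idComonad]
      coassoc := by simp [idComonad] }
  map f :=
    { f := f
      h := by simp [idComonad] }

instance : (toIdCoalgebra M).Faithful :=
  ⟨fun h => congrArg Comonad.Coalgebra.Hom.f h⟩

instance : (toIdCoalgebra M).Full where
  map_surjective g := ⟨g.f, by ext; rfl⟩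

instance : (toIdCoalgebra M).EssSurj where
  mem_essImage Y := by
    have ha : Y.a = 𝟙 Y.A := by simpa [idComonad] using Y.counit
    refine ⟨Y.A, ⟨?_⟩⟩
    exact
      { hom := { f := 𝟙 Y.A, h := by simp [toIdCoalgebra, idComonad, ha] }
        inv := { f := 𝟙 Y.A, h := by simp [toIdCoalgebra, idComonad, ha] }
        hom_inv_id := by ext; exact Category.id_comp _
        inv_hom_id := by ext; exact Category.id_comp _ }

instance : (toIdCoalgebra M).IsEquivalence where

/-- Split equalizers are preserved by all functors. -/
def splitPreserves {C : Type*} {D : Type*} [Category C] [Category D] {A B E : C} {f g : A ⟶ B}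
    {ι : E ⟶ A} (q : IsSplitEqualizer f g ι) (F : C ⥤ D) :
    PreservesLimit (parallelPair f g) F :=
  preservesLimit_of_preserves_limit_cone q.isEqualizer
    ((isLimitMapConeForkEquiv F q.condition).symm (q.map F).isEqualizer)

variable {M}

theorem forward {H : M ⥤ N} {K : N ⥤ M} (adj : H ⊣ K)
    (h : (Comonad.comparison ((idComonad M).adj.comp adj)).IsEquivalence) :
    ((∀ {A B : M} (f g : A ⟶ B), IsCoreflexivePair f g → IsHSplitPair H f g →
        HasEqualizer f g) ∧
     (∀ {A B : M} (f g : A ⟶ B), IsCoreflexivePair f g → IsHSplitPair H f g →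
        PreservesEqualizerOf H f g) ∧
     (∀ {A B : M} (f : A ⟶ B), IsIso (H.map f) → IsIso f)) := by
  letI adj' := (idComonad M).adj.comp adj
  letI T := adj'.toComonad
  letI Q : M ⥤ T.Coalgebra := toIdCoalgebra M ⋙ Comonad.comparison adj'
  haveI := h
  haveI : Q.IsEquivalence := inferInstance
  -- `Q ⋙ forget` is isomorphic to `H`
  letI R : M ⥤ N := Q ⋙ Comonad.forget T
  have eR : R ≅ H := NatIso.ofComponents (fun X => Iso.refl _) (fun {X Y} f => by
    change H.map f ≫ 𝟙 _ = 𝟙 _ ≫ H.map f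
    simp)
  -- conservativity
  have hCons : ∀ {A B : M} (f : A ⟶ B), IsIso (H.map f) → IsIso f := by
    intro A B f hf
    haveI : IsIso (R.map f) := hf
    exact isIso_of_reflects_iso f R
  have main : ∀ {A B : M} (f g : A ⟶ B), IsHSplitPair H f g →
      HasEqualizer f g ∧ PreservesEqualizerOf H f g := by
    intro A B f g hsplit
    haveI hse : HasSplitEqualizer (H.map g) (H.map f) := ConjAux.IsHSplitPair.hasSplitEqualizer hsplit
    have q := HasSplitEqualizer.isSplitEqualizer (H.map g) (H.map f)
    haveI sp1 : PreservesLimit (parallelPair (H.map g) (H.map f)) T.toFunctor :=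
      splitPreserves q _
    haveI sp2 : PreservesLimit (parallelPair (T.toFunctor.map (H.map g))
        (T.toFunctor.map (H.map f))) T.toFunctor :=
      splitPreserves (q.map T.toFunctor) _
    haveI i1 : PreservesLimit (parallelPair (Q.map g) (Q.map f) ⋙ Comonad.forget T)
        T.toFunctor :=
      preservesLimit_of_iso_diagram (K₁ := parallelPair (H.map g) (H.map f)) T.toFunctor
        ((diagramIsoParallelPair (parallelPair (Q.map g) (Q.map f) ⋙ Comonad.forget T)).symm)
    haveI i2 : PreservesLimit ((parallelPair (Q.map g) (Q.map f) ⋙ Comonad.forget T) ⋙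
        T.toFunctor) T.toFunctor :=
      preservesLimit_of_iso_diagram
        (K₁ := parallelPair (T.toFunctor.map (H.map g)) (T.toFunctor.map (H.map f))) T.toFunctor
        ((diagramIsoParallelPair ((parallelPair (Q.map g) (Q.map f) ⋙ Comonad.forget T) ⋙
          T.toFunctor)).symm)
    haveI : CreatesLimit (parallelPair (Q.map g) (Q.map f)) (Comonad.forget T) :=
      CategoryTheory.Comonad.forgetCreatesLimit _
    haveI : HasLimit (parallelPair (Q.map g) (Q.map f) ⋙ Comonad.forget T) :=
      hasLimit_of_iso (F := parallelPair (H.map g) (H.map f))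
        ((diagramIsoParallelPair (parallelPair (Q.map g) (Q.map f) ⋙ Comonad.forget T)).symm)
    haveI hQ : HasEqualizer (Q.map g) (Q.map f) :=
      hasLimit_of_created _ (Comonad.forget T)
    haveI : HasLimit (parallelPair g f ⋙ Q) :=
      hasLimit_of_iso (F := parallelPair (Q.map g) (Q.map f))
        ((diagramIsoParallelPair (parallelPair g f ⋙ Q)).symm)
    haveI hgf : HasEqualizer g f := Adjunction.hasLimit_of_comp_equivalence (parallelPair g f) Q
    haveI : PreservesLimit (parallelPair g f ⋙ Q) (Comonad.forget T) :=
      preservesLimit_of_iso_diagram (K₁ := parallelPair (Q.map g) (Q.map f)) (Comonad.forget T)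
        ((diagramIsoParallelPair (parallelPair g f ⋙ Q)).symm)
    haveI hRp : PreservesLimit (parallelPair g f) R := inferInstance
    haveI hHp : PreservesLimit (parallelPair g f) H :=
      preservesLimit_of_natIso (parallelPair g f) eR
    exact ⟨hasEqualizer_swap hgf,
      preservesEqualizerOf_swap H (preservesEqualizerOf_of_preservesLimit H g f)⟩
  exact ⟨fun f g _ hs => (main f g hs).1, fun f g _ hs => (main f g hs).2, hCons⟩

end Forward


open ConjAux

/-- **The Conjugate Comonadicity Theorem.**  Let `(H, K)` be an adjunction.  The following
are equivalent:
(i) for every comonad `C` on `M` such that `C` and `C²` preserve equalizers of coreflexive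
`H`-split pairs, the comparison functor `Q_C : M_C → N_{C̃}` into coalgebras over the
conjugate comonad `C̃ = HCK` (the comonad of the composite adjunction `(H U_C, F_C K)`)
is an equivalence;
(ii) `M` has equalizers of all coreflexive `H`-split pairs, `H` preserves these
equalizers, and `H` is conservative. -/
theorem stmt_11 {H : M ⥤ N} {K : N ⥤ M} (adj : H ⊣ K) :
    (∀ C : Comonad M,
      (∀ {A B : M} (f g : A ⟶ B), IsCoreflexivePair f g → IsHSplitPair H f g →
        PreservesEqualizerOf C.toFunctor f g ∧
        PreservesEqualizerOf (C.toFunctor ⋙ C.toFunctor) f g) →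
      (Comonad.comparison (C.adj.comp adj)).IsEquivalence) ↔
    ((∀ {A B : M} (f g : A ⟶ B), IsCoreflexivePair f g → IsHSplitPair H f g →
        HasEqualizer f g) ∧
     (∀ {A B : M} (f g : A ⟶ B), IsCoreflexivePair f g → IsHSplitPair H f g →
        PreservesEqualizerOf H f g) ∧
     (∀ {A B : M} (f : A ⟶ B), IsIso (H.map f) → IsIso f)) := by
  
  constructor
  · intro h
    refine forward adj (h (idComonad M) ?_)
    intro A B f g _ _
    haveI : PreservesLimit (parallelPair f g) (idComonad M).toFunctor :=
      inferInstanceAs (PreservesLimit (parallelPair f g) (𝟭 M))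
    haveI : PreservesLimit (parallelPair f g) ((idComonad M).toFunctor ⋙ (idComonad M).toFunctor) :=
      inferInstanceAs (PreservesLimit (parallelPair f g) (𝟭 M ⋙ 𝟭 M))
    exact ⟨preservesEqualizerOf_of_preservesLimit _ f g,
      preservesEqualizerOf_of_preservesLimit _ f g⟩
  · rintro ⟨hEq, hPres, hCons⟩ C hC
    exact backward adj (fun f g a b => hEq f g a b) (fun f g a b => hPres f g a b)
      (fun f a => hCons f a) C (fun f g a b => hC f g a b)
end

section
/- Let D and E be comonads on the same category N and let ρ : E → D be a natural transformation such that (1_N, ρ) is a colax morphism of comonads. Then the induced functor I_ρ : N_E → N_D between coalgebra categories is an equivalence if and only if ρ is an invertible natural transformation. -/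
open CategoryTheory

section Aux

variable {N : Type*} [Category N] (E D : Comonad N)
    (ρ : E.toFunctor ⟶ D.toFunctor)
    (colax_ε : ∀ X : N, ρ.app X ≫ D.ε.app X = E.ε.app X)
    (colax_δ : ∀ X : N,
      ρ.app X ≫ D.δ.app X = E.δ.app X ≫ ρ.app (E.obj X) ≫ D.map (ρ.app X))

/-- The canonical induced functor on coalgebra categories. -/
@[simps, reducible]
def inducedCoalgFunctor : E.Coalgebra ⥤ D.Coalgebra where
  obj A :=
    { A := A.A
      a := A.a ≫ ρ.app A.A
      counit := by rw [Category.assoc, colax_ε, A.counit]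
      coassoc := by
        have hnat : E.map A.a ≫ ρ.app (E.obj A.A) = ρ.app A.A ≫ D.map A.a :=
          ρ.naturality A.a
        simp only [Category.assoc, Functor.map_comp]
        rw [colax_δ, A.coassoc_assoc, ← Category.assoc (E.map A.a), hnat]
        simp only [Category.assoc] }
  map {A B} f :=
    { f := f.f
      h := by
        have h1 := f.h
        have h2 : E.map f.f ≫ ρ.app B.A = ρ.app A.A ≫ D.map f.f :=
          ρ.naturality f.f
        dsimp
        simp only [Category.assoc]
        rw [← h2, ← Category.assoc, h1, Category.assoc] }
  map_id _ := rfl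
  map_comp _ _ := rfl

theorem coalg_eq {G : Comonad N} (A B : G.Coalgebra) (h : A.A = B.A)
    (h' : A.a = eqToHom h ≫ B.a ≫ eqToHom (congrArg G.obj h).symm) : A = B := by
  obtain ⟨A, a, _, _⟩ := A
  obtain ⟨B, b, _, _⟩ := B
  obtain rfl : A = B := h
  simp only [eqToHom_refl, Category.comp_id, Category.id_comp] at h'
  subst h'
  rfl

theorem coalg_eqToHom_f {G : Comonad N} {A B : G.Coalgebra} (h : A = B) :
    (eqToHom h).f = eqToHom (congrArg Comonad.Coalgebra.A h) := by
  subst h; rfl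

theorem induced_isIso_of_isEquivalence
    (hEq : (inducedCoalgFunctor E D ρ colax_ε colax_δ).IsEquivalence) : IsIso ρ := by
  have : (inducedCoalgFunctor E D ρ colax_ε colax_δ).Full := hEq.full
  have : (inducedCoalgFunctor E D ρ colax_ε colax_δ).Faithful := hEq.faithful
  have : (inducedCoalgFunctor E D ρ colax_ε colax_δ).EssSurj := hEq.essSurj
  have : ∀ X : N, IsIso (ρ.app X) := by
    intro X
    set A := (inducedCoalgFunctor E D ρ colax_ε colax_δ).objPreimage (D.cofree.obj X) with hA
    set φ : (inducedCoalgFunctor E D ρ colax_ε colax_δ).obj A ≅ D.cofree.obj X :=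
      (inducedCoalgFunctor E D ρ colax_ε colax_δ).objObjPreimageIso (D.cofree.obj X) with hφ
    set σ : D.obj X ⟶ E.obj X := φ.inv.f ≫ A.a ≫ E.map (φ.hom.f ≫ D.ε.app X) with hσ
    have hinvhom : φ.inv.f ≫ φ.hom.f = 𝟙 _ := by
      rw [← Comonad.Coalgebra.comp_f, φ.inv_hom_id]; rfl
    refine ⟨σ, ?_, ?_⟩
    · -- ρ.app X ≫ σ = 𝟙 (E.obj X)
      have hm : ((inducedCoalgFunctor E D ρ colax_ε colax_δ).obj (E.cofree.obj X)).a ≫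
          D.map (ρ.app X) = ρ.app X ≫ (D.cofree.obj X).a := by
        simp only [inducedCoalgFunctor_obj_a, Comonad.cofree_obj_A,
          Comonad.cofree_obj_a, Category.assoc]
        exact (Category.assoc _ _ _).trans (colax_δ X).symm
      set g : E.cofree.obj X ⟶ A :=
        (inducedCoalgFunctor E D ρ colax_ε colax_δ).preimage
          ((⟨ρ.app X, hm⟩ : (inducedCoalgFunctor E D ρ colax_ε colax_δ).obj (E.cofree.obj X) ⟶
            D.cofree.obj X) ≫ φ.inv) with hg
      have hgmap : (inducedCoalgFunctor E D ρ colax_ε colax_δ).map g =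
          (⟨ρ.app X, hm⟩ : (inducedCoalgFunctor E D ρ colax_ε colax_δ).obj (E.cofree.obj X) ⟶
            D.cofree.obj X) ≫ φ.inv :=
        (inducedCoalgFunctor E D ρ colax_ε colax_δ).map_preimage _
      have hgf : g.f = ρ.app X ≫ φ.inv.f := by
        have := congrArg Comonad.Coalgebra.Hom.f hgmap
        simp at this; exact this
      have hgh : E.δ.app X ≫ E.map g.f = g.f ≫ A.a := g.h
      calc ρ.app X ≫ σ
          = (ρ.app X ≫ φ.inv.f) ≫ A.a ≫ E.map (φ.hom.f ≫ D.ε.app X) := by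
            rw [hσ]; exact (Category.assoc _ _ _).symm
        _ = (g.f ≫ A.a ≫ E.map (φ.hom.f ≫ D.ε.app X) : E.obj X ⟶ E.obj X) := by rw [hgf]
        _ = E.δ.app X ≫ E.map g.f ≫ E.map (φ.hom.f ≫ D.ε.app X) :=
            ((Category.assoc _ _ _).symm.trans
              (congrArg (fun t => t ≫ E.map (φ.hom.f ≫ D.ε.app X)) hgh.symm)).trans
              (Category.assoc _ _ _)
        _ = E.δ.app X ≫ E.map (g.f ≫ φ.hom.f ≫ D.ε.app X) :=
            congrArg (E.δ.app X ≫ ·) (E.map_comp _ _).symm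
        _ = E.δ.app X ≫ E.map (ρ.app X ≫ D.ε.app X) := by
            rw [hgf]
            congr 2
            exact (Category.assoc _ _ _).trans (congrArg (ρ.app X ≫ ·)
              (((Category.assoc _ _ _).symm.trans (congrArg (· ≫ D.ε.app X) hinvhom)).trans
                (Category.id_comp _)))
        _ = E.δ.app X ≫ E.map (E.ε.app X) := by rw [colax_ε]
        _ = 𝟙 _ := E.right_counit X
    · -- σ ≫ ρ.app X = 𝟙 (D.obj X)
      have hφh : A.a ≫ ρ.app A.A ≫ D.map φ.hom.f = φ.hom.f ≫ D.δ.app X := by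
        have := φ.hom.h
        simp only [inducedCoalgFunctor_obj_A, inducedCoalgFunctor_obj_a,
          Comonad.cofree_obj_A, Comonad.cofree_obj_a, Category.assoc] at this; exact this
      have hnat : E.map (φ.hom.f ≫ D.ε.app X) ≫ ρ.app X =
          ρ.app A.A ≫ D.map (φ.hom.f ≫ D.ε.app X) := ρ.naturality _
      calc σ ≫ ρ.app X
          = (φ.inv.f ≫ A.a ≫ E.map (φ.hom.f ≫ D.ε.app X) ≫ ρ.app X : D.obj X ⟶ D.obj X) := by
            rw [hσ]; exact (Category.assoc _ _ _).trans (congrArg (φ.inv.f ≫ ·) (Category.assoc _ _ _))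
        _ = (φ.inv.f ≫ A.a ≫ ρ.app A.A ≫ D.map (φ.hom.f ≫ D.ε.app X) : D.obj X ⟶ D.obj X) := by
            exact congrArg (φ.inv.f ≫ A.a ≫ ·) hnat
        _ = (φ.inv.f ≫ (A.a ≫ ρ.app A.A ≫ D.map φ.hom.f) ≫ D.map (D.ε.app X) :
              D.obj X ⟶ D.obj X) := by
            simp only [Category.assoc]
            exact congrArg (fun t => φ.inv.f ≫ A.a ≫ ρ.app A.A ≫ t) (D.map_comp _ _)
        _ = (φ.inv.f ≫ (φ.hom.f ≫ D.δ.app X) ≫ D.map (D.ε.app X) : D.obj X ⟶ D.obj X) := by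
            exact congrArg (fun t => φ.inv.f ≫ t ≫ D.map (D.ε.app X)) hφh
        _ = 𝟙 _ := by
            exact (congrArg (φ.inv.f ≫ ·) (Category.assoc _ _ _)).trans
              ((Category.assoc _ _ _).symm.trans
                ((congrArg (· ≫ D.δ.app X ≫ D.map (D.ε.app X)) hinvhom).trans
                  ((Category.id_comp _).trans (D.right_counit X))))
  exact NatIso.isIso_of_isIso_app ρ

theorem induced_isEquivalence_of_isIso (hIso : IsIso ρ) :
    (inducedCoalgFunctor E D ρ colax_ε colax_δ).IsEquivalence := by
  have happ : ∀ X : N, IsIso (ρ.app X) := fun X => inferInstance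
  have hfaithful : (inducedCoalgFunctor E D ρ colax_ε colax_δ).Faithful := by
    constructor
    intro A B f g h
    ext
    have := congrArg Comonad.Coalgebra.Hom.f h
    simpa using this
  have hfull : (inducedCoalgFunctor E D ρ colax_ε colax_δ).Full := by
    constructor
    intro A B g
    refine ⟨⟨g.f, ?_⟩, ?_⟩
    · have hg : A.a ≫ ρ.app A.A ≫ D.map g.f = g.f ≫ B.a ≫ ρ.app B.A := by
        have := g.h
        simpa only [inducedCoalgFunctor_obj_A, inducedCoalgFunctor_obj_a,
          Category.assoc] using this
      have hnat : E.map g.f ≫ ρ.app B.A = ρ.app A.A ≫ D.map g.f :=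
        ρ.naturality g.f
      rw [← cancel_mono (ρ.app B.A)]
      simp only [Category.assoc]
      rw [hnat, hg]
    · ext; rfl
  have hess : (inducedCoalgFunctor E D ρ colax_ε colax_δ).EssSurj := by
    constructor
    intro B
    have hnat : E.map (B.a ≫ inv (ρ.app B.A)) ≫ ρ.app (E.obj B.A) =
        ρ.app B.A ≫ D.map (B.a ≫ inv (ρ.app B.A)) :=
      ρ.naturality (B.a ≫ inv (ρ.app B.A))
    refine ⟨⟨B.A, B.a ≫ inv (ρ.app B.A), ?_, ?_⟩, ⟨Comonad.Coalgebra.isoMk (Iso.refl _) ?_⟩⟩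
    · rw [Category.assoc, ← colax_ε, ← Category.assoc (inv (ρ.app B.A)),
        IsIso.inv_hom_id, Category.id_comp, B.counit]
    · rw [← cancel_mono (ρ.app (E.obj B.A) ≫ D.map (ρ.app B.A))]
      calc ((B.a ≫ inv (ρ.app B.A)) ≫ E.δ.app B.A) ≫
              ρ.app (E.obj B.A) ≫ D.map (ρ.app B.A)
          = (B.a ≫ inv (ρ.app B.A)) ≫ ρ.app B.A ≫ D.δ.app B.A := by
            rw [colax_δ]; simp only [Category.assoc]
        _ = B.a ≫ D.map B.a := by
            rw [Category.assoc, ← Category.assoc (inv (ρ.app B.A)), IsIso.inv_hom_id,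
              Category.id_comp, B.coassoc]
        _ = B.a ≫ inv (ρ.app B.A) ≫ ρ.app B.A ≫
              D.map (B.a ≫ inv (ρ.app B.A)) ≫ D.map (ρ.app B.A) := by
            rw [← D.map_comp, Category.assoc, IsIso.inv_hom_id, Category.comp_id,
              ← Category.assoc (inv (ρ.app B.A)), IsIso.inv_hom_id, Category.id_comp]
        _ = ((B.a ≫ inv (ρ.app B.A)) ≫ E.map (B.a ≫ inv (ρ.app B.A))) ≫
              ρ.app (E.obj B.A) ≫ D.map (ρ.app B.A) := by
            simp only [Category.assoc]
            rw [← Category.assoc (E.map _), hnat]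
            simp only [Category.assoc]
    · simp
  exact ⟨hfaithful, hfull, hess⟩

end Aux

/-- Let `D` and `E` be comonads on the same category `N` and `ρ : E ⟶ D` a natural
transformation such that `(1_N, ρ)` is a colax morphism of comonads.  Let `F` be the
induced functor `I_ρ : N_E → N_D` (characterized by commuting with the forgetful functors
and sending a coalgebra `(N, a)` to `(N, ρ_N ∘ a)`).  Then `F` is an equivalence if and
only if `ρ` is invertible. -/
theorem stmt_15 {N : Type*} [Category N] (E D : Comonad N)
    (ρ : E.toFunctor ⟶ D.toFunctor)
    (colax_ε : ∀ X : N, ρ.app X ≫ D.ε.app X = E.ε.app X)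
    (colax_δ : ∀ X : N,
      ρ.app X ≫ D.δ.app X = E.δ.app X ≫ ρ.app (E.obj X) ≫ D.map (ρ.app X))
    (F : E.Coalgebra ⥤ D.Coalgebra) (hF : F ⋙ D.forget = E.forget)
    (hFa : ∀ A : E.Coalgebra,
      (F.obj A).a =
        eqToHom (Functor.congr_obj hF A) ≫ (A.a ≫ ρ.app A.A) ≫
          eqToHom (congrArg (fun Z => D.obj Z) (Functor.congr_obj hF A)).symm) :
    F.IsEquivalence ↔ IsIso ρ := by
  have hobj : ∀ A, F.obj A = (inducedCoalgFunctor E D ρ colax_ε colax_δ).obj A := by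
    intro A
    exact coalg_eq _ _ (Functor.congr_obj hF A) (hFa A)
  have hFF₀ : F = inducedCoalgFunctor E D ρ colax_ε colax_δ := by
    refine CategoryTheory.Functor.ext hobj ?_
    intro A B f
    ext
    have := Functor.congr_hom hF f
    simp only [Functor.comp_map, Comonad.forget_map] at this
    simp only [Comonad.Coalgebra.comp_f, this, coalg_eqToHom_f]
    congr 1
  rw [hFF₀]
  exact ⟨induced_isIso_of_isEquivalence E D ρ colax_ε colax_δ,
    induced_isEquivalence_of_isIso E D ρ colax_ε colax_δ⟩
end
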